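/- arXiv:1506.02246 — 2 statements merged into one kernel-verified Lean document; each statement's English description precedes it below -/
import Mathlib

section
/- Let (a_i) be the gap sequence and A(m,n) = Σ_{i=m}^{m+n−1} a_i. Let m ≥ 0, s > m, t ≥ 0, 2^m < n ≤ 2^s and 0 ≤ h < 2^m. Then A(2^m, n − 2^m) ≥ A(2^m + t·2^s − h, n − 2^m). -/
/-- The gap sequence: `a_i = (1/α)^j` where `i = 2^j(2m'+1)`. -/
noncomputable def gapSeq (α : ℝ) (i : ℕ) : ℝ := α⁻¹ ^ padicValNat 2 i

/-- `A(m,n) = Σ_{i=m}^{m+n-1} a_i`. -/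
noncomputable def gapSum (α : ℝ) (m n : ℕ) : ℝ := ∑ i ∈ Finset.Ico m (m + n), gapSeq α i

/- Auxiliary lemmas -/

private lemma ceil_le_iff {D x k : ℕ} (hD : 0 < D) : (x + D - 1) / D ≤ k ↔ x ≤ k * D := by
  rw [Nat.div_le_iff_le_mul_add_pred hD, mul_comm k D]
  generalize D * k = y
  omega

private lemma le_ceil {D x : ℕ} (hD : 0 < D) : x ≤ ((x + D - 1) / D) * D :=
  (ceil_le_iff hD).mp le_rfl

private lemma ceil_mono {D x y : ℕ} (h : x ≤ y) : (x + D - 1) / D ≤ (y + D - 1) / D :=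
  Nat.div_le_div_right (by omega)

private lemma ceil_subadd {D a L : ℕ} (hD : 0 < D) :
    (a + L + D - 1) / D ≤ (a + D - 1) / D + (L + D - 1) / D := by
  rw [ceil_le_iff hD, add_mul]
  exact add_le_add (le_ceil hD) (le_ceil hD)

private lemma ceil_dvd {D a : ℕ} (hD : 0 < D) (h : D ∣ a) : (a + D - 1) / D = a / D := by
  obtain ⟨q, rfl⟩ := h
  have h1 : D * q + D - 1 = D * q + (D - 1) := by omega
  rw [h1, Nat.mul_add_div hD, Nat.div_eq_of_lt (by omega), Nat.mul_div_cancel_left _ hD]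
  omega

private lemma ceil_add_dvd {D a L : ℕ} (hD : 0 < D) (h : D ∣ a) :
    (a + L + D - 1) / D = a / D + (L + D - 1) / D := by
  obtain ⟨q, rfl⟩ := h
  have h1 : D * q + L + D - 1 = D * q + (L + D - 1) := by omega
  rw [h1, Nat.mul_add_div hD, Nat.mul_div_cancel_left _ hD]

private lemma count_multiples (a b D : ℕ) (hD : 0 < D) :
    ((Finset.Ico a b).filter (fun i => D ∣ i)).card
      = (b + D - 1) / D - (a + D - 1) / D := by
  have himg : (Finset.Ico a b).filter (fun i => D ∣ i)
      = (Finset.Ico ((a + D - 1) / D) ((b + D - 1) / D)).image (· * D) := by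
    ext i
    simp only [Finset.mem_filter, Finset.mem_Ico, Finset.mem_image]
    constructor
    · rintro ⟨⟨h1, h2⟩, k, rfl⟩
      refine ⟨k, ⟨(ceil_le_iff hD).mpr (by rw [mul_comm]; exact h1), ?_⟩, mul_comm k D⟩
      by_contra hcon
      push_neg at hcon
      exact absurd ((ceil_le_iff hD).mp hcon) (by rw [mul_comm]; omega)
    · rintro ⟨k, ⟨hk1, hk2⟩, rfl⟩
      refine ⟨⟨(ceil_le_iff hD).mp hk1, ?_⟩, ⟨k, mul_comm k D⟩⟩
      by_contra hcon
      push_neg at hcon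
      exact absurd ((ceil_le_iff hD).mpr hcon) (by omega)
  rw [himg, Finset.card_image_of_injective _
    (fun x y hxy => Nat.eq_of_mul_eq_mul_right hD hxy), Nat.card_Ico]

private lemma val_lt {i s : ℕ} (h1 : 0 < i) (h2 : i < 2 ^ s) : padicValNat 2 i < s := by
  have hd : (2 : ℕ) ^ padicValNat 2 i ∣ i := pow_padicValNat_dvd
  have : (2 : ℕ) ^ padicValNat 2 i ≤ i := Nat.le_of_dvd h1 hd
  have : (2 : ℕ) ^ padicValNat 2 i < 2 ^ s := lt_of_le_of_lt this h2
  exact (Nat.pow_lt_pow_iff_right (by norm_num)).mp this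

private lemma val_dvd_iff {j i : ℕ} (hi : 0 < i) : 2 ^ j ∣ i ↔ j ≤ padicValNat 2 i :=
  padicValNat_dvd_iff_le hi.ne'

private lemma val_add_mul {r t s : ℕ} (h1 : 0 < r) (h2 : r < 2 ^ s) :
    padicValNat 2 (r + t * 2 ^ s) = padicValNat 2 r := by
  set j := padicValNat 2 r with hj
  have hjs : j < s := val_lt h1 h2
  have hx : 0 < r + t * 2 ^ s := by omega
  have hd : (2 : ℕ) ^ j ∣ r + t * 2 ^ s :=
    dvd_add pow_padicValNat_dvd ((pow_dvd_pow 2 hjs.le).mul_left t)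
  have hnd : ¬ (2 : ℕ) ^ (j + 1) ∣ r + t * 2 ^ s := by
    intro hdvd
    have h2s : (2 : ℕ) ^ (j + 1) ∣ t * 2 ^ s := (pow_dvd_pow 2 hjs).mul_left t
    have : (2 : ℕ) ^ (j + 1) ∣ r := by
      have := Nat.dvd_sub hdvd h2s
      simpa using this
    have := (val_dvd_iff h1).mp this
    omega
  have hle : j ≤ padicValNat 2 (r + t * 2 ^ s) := (val_dvd_iff hx).mp hd
  have hlt : padicValNat 2 (r + t * 2 ^ s) < j + 1 := by
    by_contra hcon
    push_neg at hcon
    exact hnd ((val_dvd_iff hx).mpr hcon)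
  omega

private noncomputable def wgt (α : ℝ) : ℕ → ℝ :=
  fun j => if j = 0 then 1 else α⁻¹ ^ j - α⁻¹ ^ (j - 1)

private lemma wgt_nonneg {α : ℝ} (hα : 1 ≤ α⁻¹) (j : ℕ) : 0 ≤ wgt α j := by
  unfold wgt
  rcases Nat.eq_zero_or_pos j with hj | hj
  · simp [hj]
  · rw [if_neg hj.ne']
    have : α⁻¹ ^ (j - 1) ≤ α⁻¹ ^ j := pow_le_pow_right₀ hα (by omega)
    linarith

private lemma wgt_telescope (α : ℝ) (v : ℕ) :
    α⁻¹ ^ v = ∑ j ∈ Finset.range (v + 1), wgt α j := by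
  induction v with
  | zero => simp [wgt]
  | succ v ih =>
    rw [Finset.sum_range_succ, ← ih]
    unfold wgt
    rw [if_neg (Nat.succ_ne_zero v)]
    simp

private lemma sum_eq_weighted (α : ℝ) (s a b : ℕ) (ha : 0 < a) (hb : b ≤ 2 ^ s) :
    ∑ i ∈ Finset.Ico a b, gapSeq α i
      = ∑ j ∈ Finset.range s, wgt α j *
          ((Finset.Ico a b).filter (fun i => 2 ^ j ∣ i)).card := by
  have step1 : ∀ i ∈ Finset.Ico a b,
      gapSeq α i = ∑ j ∈ Finset.range s, if j ≤ padicValNat 2 i then wgt α j else 0 := by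
    intro i hi
    rw [Finset.mem_Ico] at hi
    have hi0 : 0 < i := lt_of_lt_of_le ha hi.1
    have hvs : padicValNat 2 i < s := val_lt hi0 (lt_of_lt_of_le hi.2 hb)
    have hfil : (Finset.range s).filter (fun j => j ≤ padicValNat 2 i)
        = Finset.range (padicValNat 2 i + 1) := by
      ext j
      simp only [Finset.mem_filter, Finset.mem_range]
      omega
    rw [gapSeq, wgt_telescope α, ← hfil, Finset.sum_filter]
  rw [Finset.sum_congr rfl step1, Finset.sum_comm]
  refine Finset.sum_congr rfl fun j _ => ?_
  have hfil2 : (Finset.Ico a b).filter (fun i => j ≤ padicValNat 2 i)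
      = (Finset.Ico a b).filter (fun i => 2 ^ j ∣ i) := by
    apply Finset.filter_congr
    intro i hi
    rw [Finset.mem_Ico] at hi
    have hi0 : 0 < i := lt_of_lt_of_le ha hi.1
    simp [val_dvd_iff hi0]
  rw [← Finset.sum_filter, hfil2, Finset.sum_const, nsmul_eq_mul, mul_comm]

private lemma count_le {m s j h n : ℕ} (hms : m < s) (hn1 : 2 ^ m < n) (hn2 : n ≤ 2 ^ s)
    (hh : h < 2 ^ m) :
    ((Finset.Ico (2 ^ m - h) (n - h)).filter (fun i => 2 ^ j ∣ i)).card
      ≤ ((Finset.Ico (2 ^ m) n).filter (fun i => 2 ^ j ∣ i)).card := by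
  have hD : 0 < 2 ^ j := pow_pos (by norm_num) j
  set D := 2 ^ j with hDdef
  rw [count_multiples _ _ _ hD, count_multiples _ _ _ hD]
  rcases le_or_gt j m with hjm | hjm
  · -- j ≤ m : D divides 2^m
    have hdvd : D ∣ 2 ^ m := pow_dvd_pow 2 hjm
    set L := n - 2 ^ m with hL
    have hn' : n = 2 ^ m + L := by omega
    have h2 : n - h = (2 ^ m - h) + L := by omega
    rw [h2, hn', ceil_add_dvd hD hdvd, ceil_dvd hD hdvd]
    have hsub := ceil_subadd (a := 2 ^ m - h) (L := L) hD
    omega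
  · -- m < j : 2^m ≤ D
    have hmD : 2 ^ m ≤ D := Nat.pow_le_pow_right (by norm_num) hjm.le
    have hm1 : 0 < 2 ^ m := pow_pos (by norm_num) m
    have hc1 : (2 ^ m + D - 1) / D = 1 := by
      apply Nat.div_eq_of_lt_le <;> omega
    have hc2 : (2 ^ m - h + D - 1) / D = 1 := by
      apply Nat.div_eq_of_lt_le <;> omega
    rw [hc1, hc2]
    have := ceil_mono (D := D) (x := n - h) (y := n) (by omega)
    omega

/-- For `m ≥ 0`, `s > m`, `t ≥ 0`, `2^m < n ≤ 2^s`, `0 ≤ h < 2^m`: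
`A(2^m, n − 2^m) ≥ A(2^m + t·2^s − h, n − 2^m)`. -/
theorem stmt16 (α : ℝ) (hα1 : 0 < α) (hα2 : α < 1 / 2) (m s t h n : ℕ)
    (hms : m < s) (hn1 : 2 ^ m < n) (hn2 : n ≤ 2 ^ s) (hh : h < 2 ^ m) :
    gapSum α (2 ^ m + t * 2 ^ s - h) (n - 2 ^ m) ≤ gapSum α (2 ^ m) (n - 2 ^ m) := by
  have hm1 : 0 < 2 ^ m := pow_pos (by norm_num) m
  set L := n - 2 ^ m with hL
  have hinv : 1 ≤ α⁻¹ := by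
    exact (one_le_inv₀ hα1).2 (by linarith)
  -- Step 1 : reduce shifted sum to sum starting at 2^m - h
  have hstart : 2 ^ m + t * 2 ^ s - h = (2 ^ m - h) + t * 2 ^ s := by omega
  have step1 : gapSum α (2 ^ m + t * 2 ^ s - h) L = gapSum α (2 ^ m - h) L := by
    unfold gapSum
    rw [hstart, Finset.sum_Ico_eq_sum_range, Finset.sum_Ico_eq_sum_range]
    have h1 : 2 ^ m - h + t * 2 ^ s + L - (2 ^ m - h + t * 2 ^ s) = L := by omega
    have h2 : 2 ^ m - h + L - (2 ^ m - h) = L := by omega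
    rw [h1, h2]
    refine Finset.sum_congr rfl fun i hi => ?_
    rw [Finset.mem_range] at hi
    have harg : 2 ^ m - h + t * 2 ^ s + i = (2 ^ m - h + i) + t * 2 ^ s := by omega
    rw [harg]
    unfold gapSeq
    rw [val_add_mul (by omega) (by omega)]
  rw [step1]
  -- Step 2 : weighted counting form
  unfold gapSum
  have e1 : 2 ^ m - h + L = n - h := by omega
  have e2 : 2 ^ m + L = n := by omega
  rw [e1, e2, sum_eq_weighted α s _ _ (by omega) (by omega),
    sum_eq_weighted α s _ _ (by omega) (by omega)]
  -- Step 3 : compare term by term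
  refine Finset.sum_le_sum fun j _ => ?_
  have hw : 0 ≤ wgt α j := wgt_nonneg hinv j
  have hc := count_le (j := j) hms hn1 hn2 hh
  exact mul_le_mul_of_nonneg_left (by exact_mod_cast hc) hw
end

section
/- For u, v ∈ Σ^k with γ(u) ≤ γ(v): ρ(u,v) = (γ(v) − γ(u))·α^k + α^{k−1}(1 − 2α)·Σ_{i=γ(u)}^{γ(v)−1} a_i, where (a_i) is the gap sequence with a_{2^j(2m+1)} = (1/α)^j. -/
noncomputable def kfin (α : ℝ) {k : ℕ} (u : Fin k → Bool) : ℝ :=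
  (1 - α) * ∑ i : Fin k, (if u i then α ^ (i : ℕ) else 0)

/-- `ρ(u,v) = |κ(u) - κ(v)|`. -/
noncomputable def rhoW (α : ℝ) {k : ℕ} (u v : Fin k → Bool) : ℝ := |kfin α u - kfin α v|

/-- `γ(u_1…u_k) = 1 + Σ_{i=1}^k u_i 2^{k-i}`. -/
def gammaW {k : ℕ} (u : Fin k → Bool) : ℕ :=
  1 + ∑ i : Fin k, (if u i then 2 ^ (k - 1 - (i : ℕ)) else 0)

noncomputable def natF (α : ℝ) (k n : ℕ) : ℝ :=
  (1 - α) * ∑ j ∈ Finset.range k, (if n.testBit j then α ^ (k - 1 - j) else 0)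

lemma natF_two_mul (α : ℝ) (k m : ℕ) : natF α (k+1) (2*m) = natF α k m := by
  unfold natF
  rw [Finset.sum_range_succ']
  have h0 : (2*m).testBit 0 = false := by simp [Nat.testBit_zero]
  have hs : ∀ j, (2*m).testBit (j+1) = m.testBit j := by
    intro j; rw [Nat.testBit_succ]; congr 1; omega
  simp only [h0, hs, Bool.false_eq_true, if_false, add_zero]
  congr 1
  apply Finset.sum_congr rfl
  intro x hx
  have : k + 1 - 1 - (x+1) = k - 1 - x := by omega
  rw [this]

lemma natF_two_mul_add_one (α : ℝ) (k m : ℕ) :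
    natF α (k+1) (2*m+1) = (1-α) * α ^ k + natF α k m := by
  unfold natF
  rw [Finset.sum_range_succ']
  have h0 : (2*m+1).testBit 0 = true := by simp [Nat.testBit_zero]
  have hs : ∀ j, (2*m+1).testBit (j+1) = m.testBit j := by
    intro j; rw [Nat.testBit_succ]; congr 1; omega
  simp only [h0, hs, if_true]
  have : ∀ x ∈ Finset.range k, (if m.testBit x then α ^ (k+1-1-(x+1)) else 0)
      = (if m.testBit x then α ^ (k-1-x) else 0) := by
    intro x hx
    have : k + 1 - 1 - (x+1) = k - 1 - x := by omega
    rw [this]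
  rw [Finset.sum_congr rfl this]
  have : k + 1 - 1 - 0 = k := by omega
  rw [this]
  ring

lemma natF_step (α : ℝ) (hα : α ≠ 0) :
    ∀ n k, 1 ≤ k → n + 1 < 2 ^ k →
      natF α k (n+1) - natF α k n = α ^ k + α ^ (k-1) * (1 - 2*α) * gapSeq α (n+1) := by
  intro n
  induction n using Nat.strong_induction_on with
  | _ n ih =>
    intro k hk hlt
    obtain ⟨k, rfl⟩ : ∃ k', k = k' + 1 := ⟨k-1, by omega⟩
    rcases Nat.even_or_odd n with ⟨m, hm⟩ | ⟨m, hm⟩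
    · have hm' : n = 2*m := by omega
      subst hm'
      rw [show 2*m+1 = 2*m+1 from rfl, natF_two_mul_add_one, natF_two_mul]
      have hv : padicValNat 2 (2*m+1) = 0 := by
        apply padicValNat.eq_zero_of_not_dvd; omega
      simp only [gapSeq, hv, pow_zero, Nat.add_sub_cancel]
      ring
    · have hm' : n = 2*m+1 := by omega
      subst hm'
      obtain ⟨k, rfl⟩ : ∃ k', k = k' + 1 := by
        refine ⟨k-1, ?_⟩
        rcases Nat.eq_zero_or_pos k with h | h
        · exfalso; subst h; norm_num at hlt
        · omega
      have h2 : 2*m+1+1 = 2*(m+1) := by ring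
      rw [h2, natF_two_mul, natF_two_mul_add_one]
      have hmlt : m + 1 < 2 ^ (k+1) := by
        rw [h2] at hlt
        have h2p : (2:ℕ) ^ (k+1+1) = 2 * 2 ^ (k+1) := by ring
        omega
      have ihm := ih m (by omega) (k+1) (by omega) hmlt
      have hv : padicValNat 2 (2*(m+1)) = 1 + padicValNat 2 (m+1) := by
        rw [padicValNat.mul (by omega) (by omega), padicValNat.self (by omega)]
      simp only [gapSeq, hv, Nat.add_sub_cancel] at *
      have heq : natF α (k+1) (m+1) = natF α (k+1) m
          + (α ^ (k+1) + α ^ k * (1 - 2*α) * α⁻¹ ^ padicValNat 2 (m+1)) := by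
        linarith [ihm]
      rw [heq, pow_add, pow_one]
      field_simp
      linear_combination (2*α*α^k*α⁻¹ ^ padicValNat 2 (m+1) - α^k*α⁻¹ ^ padicValNat 2 (m+1)) * mul_inv_cancel₀ hα

lemma testBit_sum (k : ℕ) : ∀ (b : ℕ → Bool) (j : ℕ),
    (∑ i ∈ Finset.range k, if b i then 2^i else 0).testBit j = (decide (j < k) && b j) := by
  induction k with
  | zero => intro b j; simp [Nat.zero_testBit]
  | succ k ih =>
    intro b j
    have hsplit : (∑ i ∈ Finset.range (k+1), if b i then 2^i else 0)
        = (if b 0 then 1 else 0) + 2 * ∑ i ∈ Finset.range k, (if b (i+1) then 2^i else 0) := by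
      rw [Finset.sum_range_succ']
      have hh : ∀ x ∈ Finset.range k, (if b (x+1) then 2^(x+1) else 0)
          = 2 * (if b (x+1) then 2^x else 0) := by intro x hx; split <;> ring
      rw [Finset.sum_congr rfl hh, ← Finset.mul_sum]
      simp [add_comm]
    rw [hsplit]
    cases j with
    | zero =>
      rw [Nat.testBit_zero]
      rcases Bool.eq_false_or_eq_true (b 0) with h | h <;> simp [h] <;> omega
    | succ j =>
      rw [Nat.testBit_succ]
      have hdiv : ((if b 0 then 1 else 0) + 2 * ∑ i ∈ Finset.range k, (if b (i+1) then 2^i else 0)) / 2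
          = ∑ i ∈ Finset.range k, (if b (i+1) then 2^i else 0) := by
        split <;> omega
      rw [hdiv, ih]
      simp [Nat.succ_lt_succ_iff]

lemma kfin_eq_natF (α : ℝ) {k : ℕ} (hk : 1 ≤ k) (u : Fin k → Bool) :
    kfin α u = natF α k (gammaW u - 1) := by
  set b : ℕ → Bool := fun j => if h : j < k then u ⟨j, h⟩ else false with hb
  set c : ℕ → Bool := fun j => b (k - 1 - j) with hc
  have hN : gammaW u - 1 = ∑ j ∈ Finset.range k, (if c j then 2^j else 0) := by
    have h1 : gammaW u - 1 = ∑ i : Fin k, (if u i then 2 ^ (k - 1 - (i:ℕ)) else 0) := by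
      unfold gammaW; omega
    rw [h1]
    calc ∑ i : Fin k, (if u i then 2^(k-1-(i:ℕ)) else 0)
        = ∑ i : Fin k, (if b (i:ℕ) then 2^(k-1-(i:ℕ)) else 0) := by
          apply Finset.sum_congr rfl; intro i _; simp [hb, i.isLt]
      _ = ∑ j ∈ Finset.range k, (if b j then 2^(k-1-j) else 0) :=
          Fin.sum_univ_eq_sum_range (fun j => if b j then 2^(k-1-j) else 0) k
      _ = ∑ j ∈ Finset.range k, (if c j then 2^j else 0) := by
          rw [← Finset.sum_range_reflect (fun j => if c j then 2^j else 0) k]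
          apply Finset.sum_congr rfl
          intro x hx
          simp only [Finset.mem_range] at hx
          have h2 : k - 1 - (k - 1 - x) = x := by omega
          simp only [hc, h2]
  rw [hN]
  unfold natF kfin
  congr 1
  calc ∑ i : Fin k, (if u i then α^((i:ℕ)) else 0)
      = ∑ i : Fin k, (if b (i:ℕ) then α^((i:ℕ)) else 0) := by
        apply Finset.sum_congr rfl; intro i _; simp [hb, i.isLt]
    _ = ∑ j ∈ Finset.range k, (if b j then α^j else 0) :=
        Fin.sum_univ_eq_sum_range (fun j => if b j then α^j else 0) k
    _ = ∑ j ∈ Finset.range k,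
          (if (∑ i ∈ Finset.range k, if c i then 2^i else 0 : ℕ).testBit j then α ^ (k-1-j) else 0) := by
        rw [← Finset.sum_range_reflect
          (fun j => if (∑ i ∈ Finset.range k, if c i then 2^i else 0 : ℕ).testBit j then α ^ (k-1-j) else 0) k]
        apply Finset.sum_congr rfl
        intro x hx
        simp only [Finset.mem_range] at hx
        rw [testBit_sum]
        have h2 : k - 1 - (k - 1 - x) = x := by omega
        have h3 : k - 1 - x < k := by omega
        simp [hc, h2, h3]

lemma telescope (g : ℕ → ℝ) {a b : ℕ} (h : a ≤ b) :
    g b - g a = ∑ i ∈ Finset.Ico a b, (g (i+1) - g i) := by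
  induction b, h using Nat.le_induction with
  | base => simp
  | succ b hab ih => rw [Finset.sum_Ico_succ_top hab, ← ih]; ring

lemma gammaW_le {k : ℕ} (u : Fin k → Bool) : gammaW u ≤ 2 ^ k := by
  unfold gammaW
  have h1 : ∑ i : Fin k, (if u i then 2 ^ (k - 1 - (i:ℕ)) else 0)
      ≤ ∑ i : Fin k, 2 ^ (k - 1 - (i:ℕ)) := by
    apply Finset.sum_le_sum; intro i _
    split
    · exact le_refl _
    · exact Nat.zero_le _
  have h2 : ∑ i : Fin k, 2 ^ (k - 1 - (i:ℕ)) = 2 ^ k - 1 := by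
    rw [Fin.sum_univ_eq_sum_range (fun j => 2 ^ (k - 1 - j)) k,
      Finset.sum_range_reflect (fun j => 2 ^ j) k, Nat.geomSum_eq (le_refl 2)]
    omega
  have := Nat.one_le_two_pow (n := k)
  omega

lemma gammaW_pos {k : ℕ} (u : Fin k → Bool) : 1 ≤ gammaW u := by
  unfold gammaW; omega


set_option maxHeartbeats 1000000 in
/-- For `u, v ∈ Σ^k` with `γ(u) ≤ γ(v)`:
`ρ(u,v) = (γ(v) − γ(u))·α^k + α^{k−1}(1 − 2α)·Σ_{i=γ(u)}^{γ(v)−1} a_i`. -/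

theorem stmt17 (α : ℝ) (hα1 : 0 < α) (hα2 : α < 1 / 2) (k : ℕ) (hk : 1 ≤ k)
    (u v : Fin k → Bool) (huv : gammaW u ≤ gammaW v) :
    rhoW α u v = ((gammaW v : ℝ) - (gammaW u : ℝ)) * α ^ k +
      α ^ (k - 1) * (1 - 2 * α) * ∑ i ∈ Finset.Ico (gammaW u) (gammaW v), gapSeq α i := by
  have hαne : α ≠ 0 := ne_of_gt hα1
  set a := gammaW u with ha
  set b := gammaW v with hbv
  have h1a : 1 ≤ a := gammaW_pos u
  have h1b : 1 ≤ b := gammaW_pos v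
  have hb2 : b ≤ 2 ^ k := gammaW_le v
  have key : kfin α v - kfin α u
      = ∑ i ∈ Finset.Ico a b, (α ^ k + α ^ (k-1) * (1 - 2*α) * gapSeq α i) := by
    rw [kfin_eq_natF α hk u, kfin_eq_natF α hk v, ← ha, ← hbv,
      telescope (fun n => natF α k n) (Nat.sub_le_sub_right huv 1)]
    have himg : Finset.Ico (a-1) (b-1) = (Finset.Ico a b).image (fun i => i - 1) := by
      ext x
      simp only [Finset.mem_Ico, Finset.mem_image]
      constructor
      · intro hx; exact ⟨x + 1, by omega, by omega⟩
      · rintro ⟨y, hy, rfl⟩; omega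
    have hinj : ∀ x ∈ Finset.Ico a b, ∀ y ∈ Finset.Ico a b,
        x - 1 = y - 1 → x = y := by
      intro x hx y hy hxy
      simp only [Finset.mem_Ico] at hx hy
      omega
    rw [himg, Finset.sum_image hinj]
    apply Finset.sum_congr rfl
    intro i hi
    simp only [Finset.mem_Ico] at hi
    have hi1 : i - 1 + 1 = i := by omega
    have hst := natF_step α hαne (i-1) k hk (by omega)
    rw [hi1]
    rw [hi1] at hst
    exact hst
  have hsum : ∑ i ∈ Finset.Ico a b, (α ^ k + α ^ (k-1) * (1 - 2*α) * gapSeq α i)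
      = ((b:ℝ) - (a:ℝ)) * α ^ k + α ^ (k-1) * (1 - 2*α) * ∑ i ∈ Finset.Ico a b, gapSeq α i := by
    rw [Finset.sum_add_distrib, Finset.sum_const, Nat.card_Ico, ← Finset.mul_sum,
      nsmul_eq_mul, Nat.cast_sub huv]
  have hnonneg : 0 ≤ kfin α v - kfin α u := by
    rw [key]
    apply Finset.sum_nonneg
    intro i _
    have : (0:ℝ) ≤ gapSeq α i := by unfold gapSeq; positivity
    have h12 : (0:ℝ) ≤ 1 - 2 * α := by linarith
    positivity
  unfold rhoW
  rw [abs_sub_comm, abs_of_nonneg hnonneg, key, hsum]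
end
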